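/- On the spectral side: for a measure space (X, μ) and a measurable function s : X → ℝ with s(x) ≥ c₁ > 0 a.e., if α > 0 and δ = c₁α/(c₁+α), then for every f ∈ L²(μ): ∫ (1/s − 1/(s+α)) |f|² dμ ≥ δ ∫ |f|²/s² dμ. -/

import Mathlib

open MeasureTheory

/-- Spectral (multiplication operator) formulation of the key estimate
`S⁻¹ − (S+α)⁻¹ ≥ δ S⁻²`: for a measure space `(X, μ)`, a measurable `s : X → ℝ`
with `s ≥ c₁ > 0` a.e., `α > 0` and `δ = c₁α/(c₁+α)`, every `f ∈ L²(μ)` satisfies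
`∫ (1/s − 1/(s+α)) |f|² dμ ≥ δ ∫ |f|²/s² dμ`. -/
theorem stmt2 {X : Type*} [MeasurableSpace X] (μ : Measure X)
    (s : X → ℝ) (hs : Measurable s) (c₁ : ℝ) (hc₁ : 0 < c₁)
    (hsc : ∀ᵐ x ∂μ, c₁ ≤ s x) (α : ℝ) (hα : 0 < α)
    (δ : ℝ) (hδ : δ = c₁ * α / (c₁ + α))
    (f : X → ℝ) (hf : MemLp f 2 μ) :
    δ * ∫ x, |f x| ^ 2 / (s x) ^ 2 ∂μ ≤
      ∫ x, (1 / s x - 1 / (s x + α)) * |f x| ^ 2 ∂μ := by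
  have hfi : Integrable (fun x => |f x| ^ 2) μ := by
    simpa [sq_abs] using hf.integrable_sq
  have h1 : Integrable (fun x => |f x| ^ 2 / (s x) ^ 2) μ := by
    refine (hfi.const_mul (1 / c₁ ^ 2)).mono' ?_ ?_
    · exact ((hfi.aestronglyMeasurable.aemeasurable.div
        (hs.pow_const 2).aemeasurable).aestronglyMeasurable)
    · filter_upwards [hsc] with x hx
      have hs0 : 0 < s x := lt_of_lt_of_le hc₁ hx
      have hcs : c₁ ^ 2 ≤ s x ^ 2 := by nlinarith
      rw [Real.norm_eq_abs, abs_of_nonneg (by positivity)]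
      calc |f x| ^ 2 / s x ^ 2 ≤ |f x| ^ 2 / c₁ ^ 2 :=
            div_le_div_of_nonneg_left (by positivity) (by positivity) hcs
        _ = 1 / c₁ ^ 2 * |f x| ^ 2 := by ring
  have h2 : Integrable (fun x => (1 / s x - 1 / (s x + α)) * |f x| ^ 2) μ := by
    refine (hfi.const_mul (1 / c₁)).mono' ?_ ?_
    · exact ((((hs.const_div 1)).sub
        ((hs.add_const α).const_div 1)).aestronglyMeasurable.mul hfi.aestronglyMeasurable)
    · filter_upwards [hsc] with x hx
      have hs0 : 0 < s x := lt_of_lt_of_le hc₁ hx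
      have hsa : 0 < s x + α := by linarith
      have hg0 : 0 ≤ 1 / s x - 1 / (s x + α) := by
        have : 1 / (s x + α) ≤ 1 / s x := by
          apply one_div_le_one_div_of_le hs0; linarith
        linarith
      rw [Real.norm_eq_abs, abs_of_nonneg (by positivity)]
      have hub : 1 / s x - 1 / (s x + α) ≤ 1 / c₁ := by
        have : 1 / s x ≤ 1 / c₁ := one_div_le_one_div_of_le hc₁ hx
        have : 0 < 1 / (s x + α) := by positivity
        linarith
      nlinarith [abs_nonneg (f x), sq_nonneg (f x)]
  rw [← integral_const_mul]
  refine integral_mono_ae (h1.const_mul δ) h2 ?_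
  filter_upwards [hsc] with x hx
  have hs0 : 0 < s x := lt_of_lt_of_le hc₁ hx
  have hsa : 0 < s x + α := by linarith
  have key : δ / s x ^ 2 ≤ 1 / s x - 1 / (s x + α) := by
    rw [hδ, div_sub_div _ _ (ne_of_gt hs0) (ne_of_gt hsa), div_div,
      div_le_div_iff₀ (by positivity) (by positivity)]
    ring_nf
    nlinarith [mul_le_mul_of_nonneg_left hx (mul_nonneg (mul_nonneg hα.le hα.le) hs0.le)]
  calc δ * (|f x| ^ 2 / s x ^ 2) = (δ / s x ^ 2) * |f x| ^ 2 := by ring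
    _ ≤ (1 / s x - 1 / (s x + α)) * |f x| ^ 2 :=
        mul_le_mul_of_nonneg_right key (by positivity)
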